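/- Consider the algebraic equilibrium system of the Coxian distributed SEIR model with constant contact rate: real numbers S*, E_n*, ..., E_1*, I*, R* satisfying μ − β̄·S*·I* − μ·S* = 0, β̄·S*·I* − (λ_n+μ)·E_n* = 0, p̄_i·λ_{i+1}·E_{i+1}* − (λ_i+μ)·E_i* = 0 for i = n−1,...,1, Σ_{i=0}^{n−1} p_i·λ_{i+1}·E_{i+1}* − (γ+μ)·I* = 0, and γ·I* − μ·R* = 0. This system has a solution with all of S*, E_n*, ..., E_1*, I*, R* strictly positive if and only if R_0 > 1, and in that case the positive solution is unique, given by S* = 1/R_0 and I* = (μ/β̄)·(R_0 − 1). -/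

import Mathlib

/-- The algebraic equilibrium system of the Coxian distributed SEIR model
with constant contact rate `β`. -/
def CoxianEquilib (n : ℕ) (μ γ β : ℝ) (lam p : ℕ → ℝ)
    (S : ℝ) (E : ℕ → ℝ) (I R : ℝ) : Prop :=
  μ - β * S * I - μ * S = 0 ∧
  β * S * I - (lam n + μ) * E n = 0 ∧
  (∀ i, 1 ≤ i → i ≤ n - 1 → (1 - p i) * lam (i + 1) * E (i + 1) - (lam i + μ) * E i = 0) ∧
  (∑ i ∈ Finset.range n, p i * lam (i + 1) * E (i + 1)) - (γ + μ) * I = 0 ∧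
  γ * I - μ * R = 0

/-- All components of an equilibrium are strictly positive. -/
def CoxianPos (n : ℕ) (S : ℝ) (E : ℕ → ℝ) (I R : ℝ) : Prop :=
  0 < S ∧ (∀ i, 1 ≤ i → i ≤ n → 0 < E i) ∧ 0 < I ∧ 0 < R

noncomputable def cprod (n : ℕ) (μ : ℝ) (lam p : ℕ → ℝ) (i : ℕ) : ℝ :=
  ∏ j ∈ Finset.Icc i (n - 1), ((1 - p j) * lam (j + 1) / (lam j + μ))

lemma cprod_last (n : ℕ) (hn : 1 ≤ n) (μ : ℝ) (lam p : ℕ → ℝ) :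
    cprod n μ lam p n = 1 := by
  unfold cprod
  rw [Finset.Icc_eq_empty (by omega), Finset.prod_empty]

lemma cprod_rec (n : ℕ) (μ : ℝ) (lam p : ℕ → ℝ) (i : ℕ) (h2 : i ≤ n - 1) :
    cprod n μ lam p i
      = (1 - p i) * lam (i + 1) / (lam i + μ) * cprod n μ lam p (i + 1) := by
  unfold cprod
  rw [show Finset.Icc i (n - 1) = insert i (Finset.Icc (i + 1) (n - 1)) by
      ext x; simp only [Finset.mem_Icc, Finset.mem_insert]; omega,
    Finset.prod_insert (by simp)]

lemma cprod_pos (n : ℕ) (μ : ℝ) (hμ : 0 < μ) (lam p : ℕ → ℝ)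
    (hlam : ∀ i, 1 ≤ i → i ≤ n → 0 < lam i)
    (hp : ∀ i, 1 ≤ i → i ≤ n - 1 → 0 < p i ∧ p i < 1)
    (i : ℕ) (hi : 1 ≤ i) : 0 < cprod n μ lam p i := by
  unfold cprod
  apply Finset.prod_pos
  intro j hj
  rw [Finset.mem_Icc] at hj
  have h1 : 0 < 1 - p j := by have := (hp j (by omega) (by omega)).2; linarith
  have h2 : 0 < lam (j + 1) := hlam _ (by omega) (by omega)
  have h3 : 0 < lam j := hlam _ (by omega) (by omega)
  positivity

lemma term_eq (n : ℕ) (hn : 1 ≤ n) (μ : ℝ) (hμ : 0 < μ) (lam p : ℕ → ℝ)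
    (hlam : ∀ i, 1 ≤ i → i ≤ n → 0 < lam i) (i : ℕ) (hi : i < n) :
    (p i * ∏ j ∈ Finset.Icc 1 (n - 1 - i), (1 - p (j + i))) *
        ∏ k ∈ Finset.Icc 1 (n - i), lam (n + 1 - k) / (lam (n + 1 - k) + μ)
      = p i * lam (i + 1) * cprod n μ lam p (i + 1) / (lam n + μ) := by
  have hA : (∏ j ∈ Finset.Icc 1 (n - 1 - i), (1 - p (j + i)))
      = ∏ j ∈ Finset.Icc (i + 1) (n - 1), (1 - p j) := by
    rw [show Finset.Icc (i + 1) (n - 1)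
        = (Finset.Icc 1 (n - 1 - i)).map (addRightEmbedding i) by
      rw [Finset.map_add_right_Icc]; congr 1 <;> omega]
    rw [Finset.prod_map]
    simp [addRightEmbedding_apply]
  have hB : (∏ k ∈ Finset.Icc 1 (n - i), lam (n + 1 - k) / (lam (n + 1 - k) + μ))
      = ∏ m ∈ Finset.Icc (i + 1) n, lam m / (lam m + μ) := by
    apply Finset.prod_nbij' (fun k => n + 1 - k) (fun m => n + 1 - m)
    · intro a ha; rw [Finset.mem_Icc] at *; omega
    · intro a ha; rw [Finset.mem_Icc] at *; omega
    · intro a ha; rw [Finset.mem_Icc] at ha; omega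
    · intro a ha; rw [Finset.mem_Icc] at ha; omega
    · intro a ha; rfl
  have hnum : (∏ m ∈ Finset.Icc (i + 1) n, lam m)
      = lam (i + 1) * ∏ j ∈ Finset.Icc (i + 1) (n - 1), lam (j + 1) := by
    rw [show Finset.Icc (i + 1) n = insert (i + 1) (Finset.Icc (i + 2) n) by
        ext x; simp only [Finset.mem_Icc, Finset.mem_insert]; omega,
      Finset.prod_insert (by simp [Finset.mem_Icc])]
    congr 1
    rw [show Finset.Icc (i + 2) n
        = (Finset.Icc (i + 1) (n - 1)).map (addRightEmbedding 1) by
      rw [Finset.map_add_right_Icc]; congr 1 <;> omega]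
    rw [Finset.prod_map]
    simp [addRightEmbedding_apply]
  have hden : (∏ m ∈ Finset.Icc (i + 1) n, (lam m + μ))
      = (∏ m ∈ Finset.Icc (i + 1) (n - 1), (lam m + μ)) * (lam n + μ) := by
    rw [show Finset.Icc (i + 1) n = Finset.Icc (i + 1) ((n - 1) + 1) by congr 1; omega,
      Finset.prod_Icc_succ_top (by omega)]
    rw [show n - 1 + 1 = n by omega]
  have hB' : (∏ m ∈ Finset.Icc (i + 1) n, lam m / (lam m + μ))
      = (∏ m ∈ Finset.Icc (i + 1) n, lam m) / ∏ m ∈ Finset.Icc (i + 1) n, (lam m + μ) :=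
    Finset.prod_div_distrib _ _
  have hc : cprod n μ lam p (i + 1)
      = ((∏ j ∈ Finset.Icc (i + 1) (n - 1), (1 - p j))
          * ∏ j ∈ Finset.Icc (i + 1) (n - 1), lam (j + 1))
        / ∏ j ∈ Finset.Icc (i + 1) (n - 1), (lam j + μ) := by
    unfold cprod
    rw [Finset.prod_div_distrib, Finset.prod_mul_distrib]
  have hD : (∏ j ∈ Finset.Icc (i + 1) (n - 1), (lam j + μ)) ≠ 0 := by
    apply ne_of_gt
    apply Finset.prod_pos
    intro j hj
    rw [Finset.mem_Icc] at hj
    have := hlam j (by omega) (by omega)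
    linarith
  have hln : lam n + μ ≠ 0 := by have := hlam n hn le_rfl; positivity
  rw [hA, hB, hB', hnum, hden, hc]
  field_simp

lemma sum_eq (n : ℕ) (hn : 1 ≤ n) (μ γ β : ℝ) (hμ : 0 < μ) (hγ : 0 < γ) (hβ : 0 < β)
    (lam p : ℕ → ℝ) (hlam : ∀ i, 1 ≤ i → i ≤ n → 0 < lam i)
    (R0 : ℝ)
    (hR0 : R0 = β / (γ + μ) * ∑ i ∈ Finset.range n,
      (p i * ∏ j ∈ Finset.Icc 1 (n - 1 - i), (1 - p (j + i))) *
        ∏ k ∈ Finset.Icc 1 (n - i), lam (n + 1 - k) / (lam (n + 1 - k) + μ)) :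
    (∑ i ∈ Finset.range n, p i * lam (i + 1) * cprod n μ lam p (i + 1))
      = (lam n + μ) * (γ + μ) * R0 / β := by
  have hln : lam n + μ ≠ 0 := by have := hlam n hn le_rfl; positivity
  have h : ∀ i ∈ Finset.range n,
      p i * lam (i + 1) * cprod n μ lam p (i + 1)
        = (lam n + μ) * ((p i * ∏ j ∈ Finset.Icc 1 (n - 1 - i), (1 - p (j + i))) *
            ∏ k ∈ Finset.Icc 1 (n - i), lam (n + 1 - k) / (lam (n + 1 - k) + μ)) := by
    intro i hi
    rw [Finset.mem_range] at hi
    rw [term_eq n hn μ hμ lam p hlam i hi]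
    field_simp
  rw [Finset.sum_congr rfl h, ← Finset.mul_sum, hR0]
  have hγμ : γ + μ ≠ 0 := by positivity
  field_simp

lemma sum_pos (n : ℕ) (hn : 1 ≤ n) (μ : ℝ) (hμ : 0 < μ)
    (lam p : ℕ → ℝ) (hlam : ∀ i, 1 ≤ i → i ≤ n → 0 < lam i)
    (hp0 : p 0 = 1) (hp : ∀ i, 1 ≤ i → i ≤ n - 1 → 0 < p i ∧ p i < 1) :
    0 < ∑ i ∈ Finset.range n, p i * lam (i + 1) * cprod n μ lam p (i + 1) := by
  apply Finset.sum_pos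
  · intro i hi
    rw [Finset.mem_range] at hi
    have hpi : 0 < p i := by
      rcases Nat.eq_zero_or_pos i with h | h
      · rw [h, hp0]; norm_num
      · exact (hp i h (by omega)).1
    have := hlam (i + 1) (by omega) (by omega)
    have := cprod_pos n μ hμ lam p hlam hp (i + 1) (by omega)
    positivity
  · exact ⟨0, Finset.mem_range.mpr (by omega)⟩

lemma R0_pos (n : ℕ) (hn : 1 ≤ n) (μ γ β : ℝ) (hμ : 0 < μ) (hγ : 0 < γ) (hβ : 0 < β)
    (lam p : ℕ → ℝ) (hlam : ∀ i, 1 ≤ i → i ≤ n → 0 < lam i)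
    (hp0 : p 0 = 1) (hp : ∀ i, 1 ≤ i → i ≤ n - 1 → 0 < p i ∧ p i < 1)
    (R0 : ℝ)
    (hR0 : R0 = β / (γ + μ) * ∑ i ∈ Finset.range n,
      (p i * ∏ j ∈ Finset.Icc 1 (n - 1 - i), (1 - p (j + i))) *
        ∏ k ∈ Finset.Icc 1 (n - i), lam (n + 1 - k) / (lam (n + 1 - k) + μ)) :
    0 < R0 := by
  have hs := sum_pos n hn μ hμ lam p hlam hp0 hp
  have he := sum_eq n hn μ γ β hμ hγ hβ lam p hlam R0 hR0
  have hln : 0 < lam n + μ := by have := hlam n hn le_rfl; positivity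
  rw [he] at hs
  by_contra h
  push_neg at h
  have : (lam n + μ) * (γ + μ) * R0 / β ≤ 0 := by
    apply div_nonpos_of_nonpos_of_nonneg _ hβ.le
    have := mul_pos hln (add_pos hγ hμ)
    exact mul_nonpos_of_nonneg_of_nonpos this.le h
  linarith

lemma sol_char (n : ℕ) (hn : 1 ≤ n) (μ γ β : ℝ) (hμ : 0 < μ) (hγ : 0 < γ) (hβ : 0 < β)
    (lam p : ℕ → ℝ) (hlam : ∀ i, 1 ≤ i → i ≤ n → 0 < lam i)
    (hp0 : p 0 = 1) (hp : ∀ i, 1 ≤ i → i ≤ n - 1 → 0 < p i ∧ p i < 1)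
    (R0 : ℝ)
    (hR0 : R0 = β / (γ + μ) * ∑ i ∈ Finset.range n,
      (p i * ∏ j ∈ Finset.Icc 1 (n - 1 - i), (1 - p (j + i))) *
        ∏ k ∈ Finset.Icc 1 (n - i), lam (n + 1 - k) / (lam (n + 1 - k) + μ))
    (S : ℝ) (E : ℕ → ℝ) (I R : ℝ)
    (he : CoxianEquilib n μ γ β lam p S E I R) (hps : CoxianPos n S E I R) :
    1 < R0 ∧ S = 1 / R0 ∧ I = μ / β * (R0 - 1) ∧ R = γ * I / μ ∧
      (∀ i, 1 ≤ i → i ≤ n →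
        E i = cprod n μ lam p i * (β * S * I / (lam n + μ))) := by
  obtain ⟨h1, h2, h3, h4, h5⟩ := he
  obtain ⟨hS, hE, hI, hR⟩ := hps
  have hlnpos : 0 < lam n + μ := by have := hlam n hn le_rfl; positivity
  have hlne : lam n + μ ≠ 0 := ne_of_gt hlnpos
  have hβne : β ≠ 0 := ne_of_gt hβ
  have hγμ : (0:ℝ) < γ + μ := by linarith
  have hrec : ∀ k, k ≤ n - 1 → E (n - k) = cprod n μ lam p (n - k) * E n := by
    intro k
    induction k with
    | zero =>
      intro _
      simp [cprod_last n hn μ lam p]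
    | succ k ih =>
      intro hk
      have hk' := ih (by omega)
      have hi1 : 1 ≤ n - (k + 1) := by omega
      have hi2 : n - (k + 1) ≤ n - 1 := by omega
      have h3' := h3 (n - (k + 1)) hi1 hi2
      have hip : n - (k + 1) + 1 = n - k := by omega
      rw [hip, hk'] at h3'
      have hlne2 : lam (n - (k + 1)) + μ ≠ 0 := by
        have := hlam _ hi1 (by omega); positivity
      rw [cprod_rec n μ lam p _ hi2, hip]
      rw [div_mul_eq_mul_div, div_mul_eq_mul_div, eq_div_iff hlne2]
      linear_combination -h3'
  have hEc : ∀ i, 1 ≤ i → i ≤ n → E i = cprod n μ lam p i * E n := by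
    intro i h1i h2i
    have := hrec (n - i) (by omega)
    rwa [show n - (n - i) = i by omega] at this
  have hsum : (∑ i ∈ Finset.range n, p i * lam (i + 1) * cprod n μ lam p (i + 1)) * E n
      = (γ + μ) * I := by
    rw [Finset.sum_mul]
    have hc : ∀ i ∈ Finset.range n,
        p i * lam (i + 1) * cprod n μ lam p (i + 1) * E n = p i * lam (i + 1) * E (i + 1) := by
      intro i hi
      rw [Finset.mem_range] at hi
      rw [hEc (i + 1) (by omega) (by omega)]; ring
    rw [Finset.sum_congr rfl hc]
    linarith [h4]
  rw [sum_eq n hn μ γ β hμ hγ hβ lam p hlam R0 hR0] at hsum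
  have hEn : (lam n + μ) * E n = β * S * I := by linarith [h2]
  have hA : (lam n + μ) * (γ + μ) * R0 / β * E n * β = (lam n + μ) * (γ + μ) * R0 * E n := by
    field_simp
  have hB : (lam n + μ) * (γ + μ) * R0 * E n = (γ + μ) * I * β := by
    rw [← hA, hsum]
  have hC : (γ + μ) * R0 * (β * S * I) = (γ + μ) * I * β := by
    rw [← hEn]; linear_combination hB
  have hne : (γ + μ) * I * β ≠ 0 := by positivity
  have key : R0 * S = 1 := by
    have hD : (γ + μ) * I * β * (R0 * S) = (γ + μ) * I * β * 1 := by
      linear_combination hC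
    exact mul_left_cancel₀ hne hD
  have hR0pos : 0 < R0 := R0_pos n hn μ γ β hμ hγ hβ lam p hlam hp0 hp R0 hR0
  have hR0ne : R0 ≠ 0 := ne_of_gt hR0pos
  have hSeq : S = 1 / R0 := by
    rw [eq_div_iff hR0ne]; linear_combination key
  have hIeq : I = μ / β * (R0 - 1) := by
    rw [div_mul_eq_mul_div, eq_div_iff hβne]
    linear_combination (-R0) * h1 + (-(β * I) - μ) * key
  have hR01 : 1 < R0 := by
    by_contra hcon
    push_neg at hcon
    have : μ / β * (R0 - 1) ≤ 0 :=
      mul_nonpos_of_nonneg_of_nonpos (le_of_lt (div_pos hμ hβ)) (by linarith)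
    rw [← hIeq] at this; linarith
  have hReq : R = γ * I / μ := by
    rw [eq_div_iff (ne_of_gt hμ)]; linarith [h5]
  refine ⟨hR01, hSeq, hIeq, hReq, ?_⟩
  intro i h1i h2i
  have hEnv : E n = β * S * I / (lam n + μ) := by
    rw [eq_div_iff hlne]; linear_combination -h2
  rw [hEc i h1i h2i, hEnv]

lemma sol_exists (n : ℕ) (hn : 1 ≤ n) (μ γ β : ℝ) (hμ : 0 < μ) (hγ : 0 < γ) (hβ : 0 < β)
    (lam p : ℕ → ℝ) (hlam : ∀ i, 1 ≤ i → i ≤ n → 0 < lam i)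
    (hp0 : p 0 = 1) (hp : ∀ i, 1 ≤ i → i ≤ n - 1 → 0 < p i ∧ p i < 1)
    (R0 : ℝ)
    (hR0 : R0 = β / (γ + μ) * ∑ i ∈ Finset.range n,
      (p i * ∏ j ∈ Finset.Icc 1 (n - 1 - i), (1 - p (j + i))) *
        ∏ k ∈ Finset.Icc 1 (n - i), lam (n + 1 - k) / (lam (n + 1 - k) + μ))
    (hR01 : 1 < R0) :
    ∃ (S : ℝ) (E : ℕ → ℝ) (I R : ℝ),
      CoxianEquilib n μ γ β lam p S E I R ∧ CoxianPos n S E I R := by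
  have hR0pos : (0:ℝ) < R0 := by linarith
  have hR0ne : R0 ≠ 0 := ne_of_gt hR0pos
  have hβne : β ≠ 0 := ne_of_gt hβ
  have hμne : μ ≠ 0 := ne_of_gt hμ
  have hlnpos : 0 < lam n + μ := by have := hlam n hn le_rfl; positivity
  have hlne : lam n + μ ≠ 0 := ne_of_gt hlnpos
  set S : ℝ := 1 / R0 with hSdef
  set I : ℝ := μ / β * (R0 - 1) with hIdef
  have hSpos : 0 < S := by positivity
  have hIpos : 0 < I := by
    have : 0 < R0 - 1 := by linarith
    have := div_pos hμ hβ
    positivity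
  set En : ℝ := β * S * I / (lam n + μ) with hEndef
  have hEnpos : 0 < En := by positivity
  refine ⟨S, fun i => cprod n μ lam p i * En, I, γ * I / μ,
    ⟨?_, ?_, ?_, ?_, ?_⟩, hSpos, ?_, hIpos, by positivity⟩
  · -- eq 1
    rw [hSdef, hIdef]; field_simp; ring
  · -- eq 2
    beta_reduce
    rw [cprod_last n hn μ lam p, hEndef]
    field_simp
    ring
  · -- eq 3
    intro i h1i h2i
    beta_reduce
    rw [cprod_rec n μ lam p i h2i]
    have hlne2 : lam i + μ ≠ 0 := by have := hlam i h1i (by omega); positivity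
    field_simp
    ring
  · -- eq 4
    beta_reduce
    have hc : ∀ i ∈ Finset.range n,
        p i * lam (i + 1) * (cprod n μ lam p (i + 1) * En)
          = p i * lam (i + 1) * cprod n μ lam p (i + 1) * En := by
      intro i _; ring
    rw [Finset.sum_congr rfl hc, ← Finset.sum_mul,
      sum_eq n hn μ γ β hμ hγ hβ lam p hlam R0 hR0, hEndef, hSdef]
    field_simp
    ring
  · -- eq 5
    field_simp
    ring
  · -- positivity of E
    intro i h1i _
    beta_reduce
    have := cprod_pos n μ hμ lam p hlam hp i h1i
    positivity

/-- The Coxian distributed SEIR model has a strictly positive (endemic)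
equilibrium iff `R0 > 1`; in that case it is unique, with `S* = 1/R0` and
`I* = (μ/β)·(R0 − 1)`. -/
theorem coxian_seir_endemic_equilibrium_iff
    (n : ℕ) (hn : 1 ≤ n) (μ γ β : ℝ) (hμ : 0 < μ) (hγ : 0 < γ) (hβ : 0 < β)
    (lam p : ℕ → ℝ) (hlam : ∀ i, 1 ≤ i → i ≤ n → 0 < lam i)
    (hp0 : p 0 = 1) (hp : ∀ i, 1 ≤ i → i ≤ n - 1 → 0 < p i ∧ p i < 1)
    (R0 : ℝ)
    (hR0 : R0 = β / (γ + μ) * ∑ i ∈ Finset.range n,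
      (p i * ∏ j ∈ Finset.Icc 1 (n - 1 - i), (1 - p (j + i))) *
        ∏ k ∈ Finset.Icc 1 (n - i), lam (n + 1 - k) / (lam (n + 1 - k) + μ)) :
    ((∃ (S : ℝ) (E : ℕ → ℝ) (I R : ℝ),
        CoxianEquilib n μ γ β lam p S E I R ∧ CoxianPos n S E I R) ↔ 1 < R0) ∧
    (∀ (S : ℝ) (E : ℕ → ℝ) (I R : ℝ),
        CoxianEquilib n μ γ β lam p S E I R → CoxianPos n S E I R →
        S = 1 / R0 ∧ I = μ / β * (R0 - 1)) ∧
    (∀ (S₁ : ℝ) (E₁ : ℕ → ℝ) (I₁ R₁ : ℝ) (S₂ : ℝ) (E₂ : ℕ → ℝ) (I₂ R₂ : ℝ),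
        CoxianEquilib n μ γ β lam p S₁ E₁ I₁ R₁ → CoxianPos n S₁ E₁ I₁ R₁ →
        CoxianEquilib n μ γ β lam p S₂ E₂ I₂ R₂ → CoxianPos n S₂ E₂ I₂ R₂ →
        S₁ = S₂ ∧ I₁ = I₂ ∧ R₁ = R₂ ∧ ∀ i, 1 ≤ i → i ≤ n → E₁ i = E₂ i) := by
  have hchar := fun S E I R he hps =>
    sol_char n hn μ γ β hμ hγ hβ lam p hlam hp0 hp R0 hR0 S E I R he hps
  refine ⟨⟨?_, ?_⟩, ?_, ?_⟩
  · rintro ⟨S, E, I, R, he, hps⟩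
    exact (hchar S E I R he hps).1
  · intro h
    exact sol_exists n hn μ γ β hμ hγ hβ lam p hlam hp0 hp R0 hR0 h
  · intro S E I R he hps
    obtain ⟨_, h1, h2, _, _⟩ := hchar S E I R he hps
    exact ⟨h1, h2⟩
  · intro S₁ E₁ I₁ R₁ S₂ E₂ I₂ R₂ he1 hpos1 he2 hpos2
    obtain ⟨_, hS1, hI1, hR1, hE1⟩ := hchar S₁ E₁ I₁ R₁ he1 hpos1
    obtain ⟨_, hS2, hI2, hR2, hE2⟩ := hchar S₂ E₂ I₂ R₂ he2 hpos2
    have hSeq : S₁ = S₂ := by rw [hS1, hS2]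
    have hIeq : I₁ = I₂ := by rw [hI1, hI2]
    refine ⟨hSeq, hIeq, by rw [hR1, hR2, hIeq], ?_⟩
    intro i h1i h2i
    rw [hE1 i h1i h2i, hE2 i h1i h2i, hSeq, hIeq]
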